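/- Under the hypotheses of the decomposition bound, if additionally P₁ᵀP₁ = I and P₂ᵀP₂ = I, then D_{P₁⊗P₂,α}(G□⁽¹⁾, G□⁽²⁾) ≤ √(n₂⁽¹⁾)·D_{P₁,α}(G₁⁽¹⁾,G₁⁽²⁾) + √(n₁⁽¹⁾)·D_{P₂,α}(G₂⁽¹⁾,G₂⁽²⁾), where D_{P,α}(G,H) = ‖(1/√α)P·L(G) − √α·L(H)·P‖_F and G□⁽ʲ⁾ = G₁⁽ʲ⁾ □ G₂⁽ʲ⁾. -/

import Mathlib

open Matrix Kronecker

noncomputable def frob {m n : Type*} [Fintype m] [Fintype n] (A : Matrix m n ℝ) : ℝ :=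
  Real.sqrt ((Aᵀ * A).trace)

section aux
variable {m n p q : Type*} [Fintype m] [Fintype n] [Fintype p] [Fintype q]

lemma trace_transpose_mul_eq (A : Matrix m n ℝ) :
    (Aᵀ * A).trace = ∑ j, ∑ i, (A i j) ^ 2 := by
  simp [Matrix.trace, Matrix.mul_apply, Matrix.diag, sq]

lemma trace_transpose_mul_nonneg (A : Matrix m n ℝ) : 0 ≤ (Aᵀ * A).trace := by
  rw [trace_transpose_mul_eq]
  positivity

attribute [local instance] Matrix.frobeniusNormedAddCommGroup

lemma frob_eq_norm (A : Matrix m n ℝ) : frob A = ‖A‖ := by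
  rw [frob, trace_transpose_mul_eq, Matrix.frobenius_norm_def, Finset.sum_comm,
    Real.sqrt_eq_rpow]
  congr 1
  refine Finset.sum_congr rfl fun j _ => Finset.sum_congr rfl fun i _ => ?_
  rw [Real.rpow_two, Real.norm_eq_abs, sq_abs]

lemma frob_add_le (A B : Matrix m n ℝ) : frob (A + B) ≤ frob A + frob B := by
  simp only [frob_eq_norm]; exact norm_add_le A B

lemma frob_kronecker (A : Matrix m n ℝ) (B : Matrix p q ℝ) :
    frob (A ⊗ₖ B) = frob A * frob B := by
  unfold frob
  rw [← Matrix.kroneckerMap_transpose, ← Matrix.mul_kronecker_mul, Matrix.trace_kronecker,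
    Real.sqrt_mul (trace_transpose_mul_nonneg A)]

lemma kron_sub (A : Matrix m n ℝ) (B C : Matrix p q ℝ) :
    A ⊗ₖ (B - C) = A ⊗ₖ B - A ⊗ₖ C := by
  ext ⟨i, j⟩ ⟨k, l⟩
  simp [Matrix.kroneckerMap_apply, mul_sub]

lemma sub_kronecker (A B : Matrix m n ℝ) (C : Matrix p q ℝ) :
    (A - B) ⊗ₖ C = A ⊗ₖ C - B ⊗ₖ C := by
  ext ⟨i, j⟩ ⟨k, l⟩
  simp [Matrix.kroneckerMap_apply, sub_mul]

end aux

noncomputable def lap {V : Type*} [Fintype V] [DecidableEq V]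
    (G : SimpleGraph V) [DecidableRel G.Adj] : Matrix V V ℝ :=
  G.adjMatrix ℝ - G.degMatrix ℝ

lemma lap_boxProd {m n : Type*} [Fintype m] [DecidableEq m] [Fintype n] [DecidableEq n]
    (G : SimpleGraph m) [DecidableRel G.Adj] (H : SimpleGraph n) [DecidableRel H.Adj]
    [DecidableRel (G □ H).Adj] :
    lap (G □ H) = lap G ⊗ₖ (1 : Matrix n n ℝ) + (1 : Matrix m m ℝ) ⊗ₖ lap H := by
  ext ⟨x, y⟩ ⟨x', y'⟩
  simp only [lap, Matrix.sub_apply, Matrix.add_apply, Matrix.kroneckerMap_apply,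
    SimpleGraph.adjMatrix_apply, SimpleGraph.degMatrix, Matrix.diagonal_apply,
    Matrix.one_apply, SimpleGraph.boxProd_adj]
  by_cases hx : x = x' <;> by_cases hy : y = y' <;>
    simp [hx, hy, Prod.ext_iff, SimpleGraph.degree_boxProd]
  ring

noncomputable def diffDist {m n : Type*} [Fintype m] [DecidableEq m] [Fintype n] [DecidableEq n]
    (G : SimpleGraph m) [DecidableRel G.Adj] (H : SimpleGraph n) [DecidableRel H.Adj]
    (P : Matrix n m ℝ) (α : ℝ) : ℝ :=
  frob ((1 / Real.sqrt α) • (P * lap G) - Real.sqrt α • (lap H * P))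

theorem stmt12 {a₁ a₂ b₁ b₂ : ℕ}
    (G₁₁ : SimpleGraph (Fin a₁)) (G₁₂ : SimpleGraph (Fin a₂))
    (G₂₁ : SimpleGraph (Fin b₁)) (G₂₂ : SimpleGraph (Fin b₂))
    [DecidableRel G₁₁.Adj] [DecidableRel G₁₂.Adj]
    [DecidableRel G₂₁.Adj] [DecidableRel G₂₂.Adj]
    [DecidableRel (G₁₁ □ G₂₁).Adj] [DecidableRel (G₁₂ □ G₂₂).Adj]
    (P₁ : Matrix (Fin a₂) (Fin a₁) ℝ) (P₂ : Matrix (Fin b₂) (Fin b₁) ℝ)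
    (hP₁ : P₁ᵀ * P₁ = 1) (hP₂ : P₂ᵀ * P₂ = 1)
    (α : ℝ) (hα : 0 < α) :
    diffDist (G₁₁ □ G₂₁) (G₁₂ □ G₂₂) (P₁ ⊗ₖ P₂) α ≤
      Real.sqrt b₁ * diffDist G₁₁ G₁₂ P₁ α + Real.sqrt a₁ * diffDist G₂₁ G₂₂ P₂ α := by
  set c := 1 / Real.sqrt α
  set d := Real.sqrt α
  set A := c • (P₁ * lap G₁₁) - d • (lap G₁₂ * P₁) with hA
  set B := c • (P₂ * lap G₂₁) - d • (lap G₂₂ * P₂) with hB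
  have key : c • ((P₁ ⊗ₖ P₂) * lap (G₁₁ □ G₂₁)) - d • (lap (G₁₂ □ G₂₂) * (P₁ ⊗ₖ P₂))
      = A ⊗ₖ P₂ + P₁ ⊗ₖ B := by
    rw [lap_boxProd, lap_boxProd, Matrix.mul_add, Matrix.add_mul,
      ← Matrix.mul_kronecker_mul, ← Matrix.mul_kronecker_mul,
      ← Matrix.mul_kronecker_mul, ← Matrix.mul_kronecker_mul,
      Matrix.mul_one, Matrix.one_mul, Matrix.mul_one, Matrix.one_mul,
      hA, hB, sub_kronecker, kron_sub,
      Matrix.smul_kronecker, Matrix.smul_kronecker,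
      Matrix.kronecker_smul, Matrix.kronecker_smul,
      smul_add, smul_add]
    abel
  have hfP₂ : frob P₂ = Real.sqrt b₁ := by
    rw [frob, hP₂, Matrix.trace_one]; simp
  have hfP₁ : frob P₁ = Real.sqrt a₁ := by
    rw [frob, hP₁, Matrix.trace_one]; simp
  calc diffDist (G₁₁ □ G₂₁) (G₁₂ □ G₂₂) (P₁ ⊗ₖ P₂) α
      = frob (A ⊗ₖ P₂ + P₁ ⊗ₖ B) := by rw [diffDist, key]
    _ ≤ frob (A ⊗ₖ P₂) + frob (P₁ ⊗ₖ B) := frob_add_le _ _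
    _ = Real.sqrt b₁ * diffDist G₁₁ G₁₂ P₁ α + Real.sqrt a₁ * diffDist G₂₁ G₂₂ P₂ α := by
        rw [frob_kronecker, frob_kronecker, hfP₂, hfP₁, diffDist, diffDist, ← hA, ← hB]
        ring
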